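/- Let ∇ be a Type B connection with C₂₂¹ = 0, C₁₂¹ = C₂₂² ≠ 0, and set α = C₁₂². Then f(x¹,x²) = (x¹)^α satisfies the equation H(f) = −f ρ_s, where ρ_s is the symmetrized Ricci tensor; i.e., f ∈ E(−1,∇). -/
import Mathlib


open Real

/-- Partial derivative ∂_i on ℝ². -/
noncomputable def pd (i : Fin 2) (f : ℝ × ℝ → ℝ) : ℝ × ℝ → ℝ :=
  fun p => if i = 0 then deriv (fun t => f (t, p.2)) p.1
           else deriv (fun t => f (p.1, t)) p.2

/-- Affine Hessian H(f)_{ij} = ∂_i∂_j f − Σ_k Γ_{ij}^k ∂_k f. -/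
noncomputable def Hess (Γ : Fin 2 → Fin 2 → Fin 2 → (ℝ × ℝ → ℝ))
    (f : ℝ × ℝ → ℝ) (i j : Fin 2) : ℝ × ℝ → ℝ :=
  fun p => pd i (pd j f) p - ∑ k, Γ i j k p * pd k f p

/-- Ricci tensor ρ_{jk} = ∂_i Γ_{jk}^i − ∂_j Γ_{ik}^i + Γ_{il}^i Γ_{jk}^l − Γ_{jl}^i Γ_{ik}^l. -/
noncomputable def Ric (Γ : Fin 2 → Fin 2 → Fin 2 → (ℝ × ℝ → ℝ)) (j k : Fin 2) :
    ℝ × ℝ → ℝ :=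
  fun p => (∑ i, pd i (Γ j k i) p) - (∑ i, pd j (Γ i k i) p)
    + (∑ i, ∑ l, Γ i l i p * Γ j k l p) - (∑ i, ∑ l, Γ j l i p * Γ i k l p)

/-- Symmetrized Ricci tensor. -/
noncomputable def RicS (Γ : Fin 2 → Fin 2 → Fin 2 → (ℝ × ℝ → ℝ)) (i j : Fin 2) :
    ℝ × ℝ → ℝ :=
  fun p => (Ric Γ i j p + Ric Γ j i p) / 2

/-- Covariant derivative of the Ricci tensor: (∇ρ)(i,j;k). -/
noncomputable def nabRic (Γ : Fin 2 → Fin 2 → Fin 2 → (ℝ × ℝ → ℝ)) (i j k : Fin 2) :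
    ℝ × ℝ → ℝ :=
  fun p => pd k (Ric Γ i j) p - ∑ l, Γ k i l p * Ric Γ l j p
    - ∑ l, Γ k j l p * Ric Γ i l p

/-- Type B Christoffel symbols Γ_{ij}^k = C_{ij}^k / x¹. -/
noncomputable def ΓB (C : Fin 2 → Fin 2 → Fin 2 → ℝ) :
    Fin 2 → Fin 2 → Fin 2 → (ℝ × ℝ → ℝ) :=
  fun i j k p => C i j k / p.1


lemma deriv_rpow_aux (d : ℝ) {x : ℝ} (hx : x ≠ 0) :
    deriv (fun t : ℝ => t ^ d) x = d * x ^ (d - 1) :=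
  (Real.hasDerivAt_rpow_const (Or.inl hx)).deriv

lemma deriv_const_div_aux (c : ℝ) {x : ℝ} (hx : x ≠ 0) :
    deriv (fun t : ℝ => c / t) x = -c / x ^ 2 := by
  have h := ((hasDerivAt_inv hx).const_mul c)
  simp only [div_eq_mul_inv]
  rw [h.deriv]
  field_simp

lemma ΓB_app (C : Fin 2 → Fin 2 → Fin 2 → ℝ) (i j k : Fin 2) :
    ΓB C i j k = fun p => C i j k / p.1 := rfl

set_option maxHeartbeats 2000000 in
/-- Type B with C₂₂¹ = 0, C₁₂¹ = C₂₂² ≠ 0: f = (x¹)^{C₁₂²} lies in E(−1,∇). -/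
theorem typeB_eigenvalue_neg_one_case1
    (C : Fin 2 → Fin 2 → Fin 2 → ℝ)
    (hsym : ∀ i j k, C i j k = C j i k)
    (h1 : C 1 1 0 = 0) (h2 : C 0 1 0 = C 1 1 1) (h3 : C 0 1 0 ≠ 0) :
    ∀ i j : Fin 2, ∀ p : ℝ × ℝ, 0 < p.1 →
      Hess (ΓB C) (fun q => q.1 ^ (C 0 1 1)) i j p
        = - (p.1 ^ (C 0 1 1)) * RicS (ΓB C) i j p := by
  intro i j p hp
  have hx : p.1 ≠ 0 := hp.ne'
  -- first derivatives of f
  have hf0 : ∀ q : ℝ × ℝ, q.1 ≠ 0 →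
      pd 0 (fun q : ℝ × ℝ => q.1 ^ C 0 1 1) q = C 0 1 1 * q.1 ^ (C 0 1 1 - 1) := by
    intro q hq
    show deriv (fun t : ℝ => t ^ C 0 1 1) q.1 = _
    exact deriv_rpow_aux _ hq
  have hf1 : pd 1 (fun q : ℝ × ℝ => q.1 ^ C 0 1 1) = fun _ => 0 := by
    funext q
    show deriv (fun _ : ℝ => q.1 ^ C 0 1 1) q.2 = 0
    exact deriv_const _ _
  have hF0 : pd 0 (fun q : ℝ × ℝ => q.1 ^ C 0 1 1) p = C 0 1 1 * p.1 ^ (C 0 1 1 - 1) :=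
    hf0 p hx
  have hF1 : pd 1 (fun q : ℝ × ℝ => q.1 ^ C 0 1 1) p = 0 := by rw [hf1]
  -- second derivatives of f
  have hFF00 : pd 0 (pd 0 (fun q : ℝ × ℝ => q.1 ^ C 0 1 1)) p
      = C 0 1 1 * (C 0 1 1 - 1) * p.1 ^ (C 0 1 1 - 2) := by
    show deriv (fun t => pd 0 (fun q : ℝ × ℝ => q.1 ^ C 0 1 1) (t, p.2)) p.1 = _
    have hev : (fun t => pd 0 (fun q : ℝ × ℝ => q.1 ^ C 0 1 1) (t, p.2))
        =ᶠ[nhds p.1] fun t => C 0 1 1 * t ^ (C 0 1 1 - 1) := by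
      filter_upwards [eventually_ne_nhds hx] with t ht
      exact hf0 (t, p.2) ht
    rw [hev.deriv_eq,
      deriv_const_mul _ ((Real.hasDerivAt_rpow_const (Or.inl hx)).differentiableAt),
      deriv_rpow_aux _ hx, show C 0 1 1 - 1 - 1 = C 0 1 1 - 2 from by ring]
    ring
  have hFF10 : pd 1 (pd 0 (fun q : ℝ × ℝ => q.1 ^ C 0 1 1)) p = 0 := by
    show deriv (fun t => pd 0 (fun q : ℝ × ℝ => q.1 ^ C 0 1 1) (p.1, t)) p.2 = 0
    have he : (fun t => pd 0 (fun q : ℝ × ℝ => q.1 ^ C 0 1 1) (p.1, t))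
        = fun _ => C 0 1 1 * p.1 ^ (C 0 1 1 - 1) := funext fun t => hf0 (p.1, t) hx
    rw [he]
    exact deriv_const _ _
  have hFF01 : pd 0 (pd 1 (fun q : ℝ × ℝ => q.1 ^ C 0 1 1)) p = 0 := by
    rw [hf1]
    show deriv (fun _ : ℝ => (0:ℝ)) p.1 = 0
    exact deriv_const _ _
  have hFF11 : pd 1 (pd 1 (fun q : ℝ × ℝ => q.1 ^ C 0 1 1)) p = 0 := by
    rw [hf1]
    show deriv (fun _ : ℝ => (0:ℝ)) p.2 = 0
    exact deriv_const _ _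
  -- derivatives of Christoffel symbols
  have hg0 : ∀ c : ℝ, pd 0 (fun r : ℝ × ℝ => c / r.1) p = -c / p.1 ^ 2 := by
    intro c
    show deriv (fun t : ℝ => c / t) p.1 = _
    exact deriv_const_div_aux _ hx
  have hg1 : ∀ c : ℝ, pd 1 (fun r : ℝ × ℝ => c / r.1) p = 0 := by
    intro c
    show deriv (fun _ : ℝ => c / p.1) p.2 = 0
    exact deriv_const _ _
  -- rpow arithmetic
  have e3 : p.1 ^ (C 0 1 1 - 1) = p.1 ^ C 0 1 1 / p.1 := by
    rw [Real.rpow_sub hp, Real.rpow_one]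
  have e4 : p.1 ^ (C 0 1 1 - 2) = p.1 ^ C 0 1 1 / (p.1 * p.1) := by
    rw [show C 0 1 1 - 2 = C 0 1 1 - 1 - 1 from by ring, Real.rpow_sub hp,
      Real.rpow_sub hp, Real.rpow_one]
    ring
  have e1 : C 1 0 0 = C 0 1 0 := hsym 1 0 0
  have e2 : C 1 0 1 = C 0 1 1 := hsym 1 0 1
  have hcase : ∀ z : Fin 2, z = 0 ∨ z = 1 := by decide
  rcases hcase i with rfl | rfl <;> rcases hcase j with rfl | rfl <;>
    simp only [Hess, RicS, Ric, ΓB_app, Fin.sum_univ_two, Fin.isValue, hg0, hg1, hF0, hF1,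
      hFF00, hFF10, hFF01, hFF11, e3, e4, e1, e2, h1, ← h2] <;>
    field_simp <;>
    ring
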